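/- Let M be a symmetric n×n matrix with entries in [0,1] such that each row sum is at most d. Then the expected number of simple k-cycles (counted as closed walks visiting k distinct vertices) in a random graph obtained by including each edge {i,j} independently with probability M_{ij} is at most d^k · rank(M). -/

import Mathlib

open Finset

private lemma walk_sum {N : ℕ} (M : Matrix (Fin N) (Fin N) ℝ) : ∀ (m : ℕ) (a b : Fin N),
    (M ^ (m + 1)) a b = ∑ c : Fin m → Fin N,
      (∏ j : Fin m, M ((Fin.cons a c : Fin (m+1) → Fin N) j.castSucc)
          ((Fin.cons a c : Fin (m+1) → Fin N) j.succ))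
        * M ((Fin.cons a c : Fin (m+1) → Fin N) (Fin.last m)) b := by
  intro m
  induction m with
  | zero => intro a b; simp [pow_one]
  | succ m ih =>
    intro a b
    rw [pow_succ', Matrix.mul_apply]
    simp_rw [ih]
    rw [← Equiv.sum_comp (Fin.consEquiv (fun _ : Fin (m+1) => Fin N)), Fintype.sum_prod_type]
    refine Finset.sum_congr rfl fun x _ => ?_
    rw [Finset.mul_sum]
    refine Finset.sum_congr rfl fun c _ => ?_
    rw [Fin.prod_univ_succ]
    simp [Fin.consEquiv, ← Fin.succ_castSucc, ← Fin.succ_last, mul_assoc]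

private lemma cyclic_sum {N : ℕ} (M : Matrix (Fin N) (Fin N) ℝ) (m : ℕ) :
    ∑ c : Fin (m+1) → Fin N, ∏ j : Fin (m+1), M (c j) (c (j+1)) = (M ^ (m+1)).trace := by
  rw [Matrix.trace]
  simp only [Matrix.diag]
  simp_rw [walk_sum M m]
  rw [← Equiv.sum_comp (Fin.consEquiv (fun _ : Fin (m+1) => Fin N)), Fintype.sum_prod_type]
  refine Finset.sum_congr rfl fun a _ => Finset.sum_congr rfl fun c _ => ?_
  rw [Fin.prod_univ_castSucc]
  simp [Fin.consEquiv, Fin.coeSucc_eq_succ, Fin.last_add_one]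

private lemma matConjPowAux {N : ℕ} (u D A : Matrix (Fin N) (Fin N) ℝ)
    (hu1 : star u * u = 1) (hu2 : u * star u = 1) (hA : A = u * D * star u) (p : ℕ) :
    A ^ p = u * D ^ p * star u := by
  induction p with
  | zero => simpa using hu2.symm
  | succ p ihp =>
    rw [pow_succ, ihp, hA, pow_succ]
    simp only [Matrix.mul_assoc]
    rw [← Matrix.mul_assoc (star u) u, hu1, Matrix.one_mul]

private lemma trace_pow_eq {N : ℕ} (M : Matrix (Fin N) (Fin N) ℝ) (hH : M.IsHermitian) (p : ℕ) :
    (M ^ p).trace = ∑ i, hH.eigenvalues i ^ p := by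
  rw [matConjPowAux (hH.eigenvectorUnitary : Matrix (Fin N) (Fin N) ℝ)
      (Matrix.diagonal (RCLike.ofReal ∘ hH.eigenvalues)) M
      (Unitary.coe_star_mul_self _) (Unitary.coe_mul_star_self _) hH.spectral_theorem p,
    Matrix.trace_mul_cycle, Unitary.coe_star_mul_self, Matrix.one_mul,
    Matrix.diagonal_pow, Matrix.trace_diagonal]
  simp

private lemma eigenvalue_abs_le {N : ℕ} (M : Matrix (Fin N) (Fin N) ℝ) (hH : M.IsHermitian)
    (hentries : ∀ i j, 0 ≤ M i j) (d : ℝ) (hrow : ∀ i, ∑ j, M i j ≤ d) (i : Fin N) :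
    |hH.eigenvalues i| ≤ d := by
  have hμ : Module.End.HasEigenvalue (Matrix.toLin' M) (hH.eigenvalues i) := by
    apply Module.End.HasEigenvalue.of_mem_spectrum
    have h1 : Matrix.toLin' M = Matrix.toLinAlgEquiv' M := rfl
    rw [h1, AlgEquiv.spectrum_eq]
    exact hH.eigenvalues_mem_spectrum_real i
  obtain ⟨a, ha⟩ := eigenvalue_mem_ball hμ
  rw [Metric.mem_closedBall, Real.dist_eq] at ha
  have h2 : ∑ j ∈ Finset.univ.erase a, ‖M a j‖ = ∑ j ∈ Finset.univ.erase a, M a j :=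
    Finset.sum_congr rfl fun j _ => Real.norm_of_nonneg (hentries a j)
  have h3 : M a a + ∑ j ∈ Finset.univ.erase a, M a j = ∑ j, M a j :=
    Finset.add_sum_erase _ _ (Finset.mem_univ a)
  calc |hH.eigenvalues i| ≤ |hH.eigenvalues i - M a a| + |M a a| := by
        simpa using abs_add_le (hH.eigenvalues i - M a a) (M a a)
    _ ≤ ∑ j ∈ Finset.univ.erase a, M a j + M a a := by
        rw [abs_of_nonneg (hentries a a)]; exact add_le_add_left (h2 ▸ ha) _
    _ = ∑ j, M a j := by rw [add_comm, h3]
    _ ≤ d := hrow a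

/-- For a symmetric matrix `M` with entries in `[0,1]` and row sums at most `d`,
the expected number of simple `k`-cycles in a graph sampled from `M` (each edge `{i,j}` included
independently with probability `M i j`) is at most `d ^ k * rank M`. The expectation is the sum
over injective cyclic vertex sequences of the product of edge probabilities. -/
theorem expected_simple_cycles_le_rank (n k : ℕ) [NeZero k] (M : Matrix (Fin n) (Fin n) ℝ)
    (hsymm : M.IsSymm) (hentries : ∀ i j, 0 ≤ M i j ∧ M i j ≤ 1)
    (d : ℝ) (hrow : ∀ i, ∑ j, M i j ≤ d) :
    ∑ c ∈ Finset.univ.filter (fun c : Fin k → Fin n => Function.Injective c),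
        ∏ j : Fin k, M (c j) (c (j + 1)) ≤ d ^ k * (M.rank : ℝ) := by
  obtain ⟨m, rfl⟩ := Nat.exists_eq_succ_of_ne_zero (NeZero.ne k)
  rcases Nat.eq_zero_or_pos n with hn | hn
  · subst hn
    haveI : IsEmpty (Fin (m+1) → Fin 0) := ⟨fun f => (f 0).elim0⟩
    have hr : M.rank = 0 := Nat.le_zero.mp (le_trans (Matrix.rank_le_card_width M) (by simp))
    simp [hr]
  have hH : M.IsHermitian := by
    rwa [Matrix.IsHermitian, Matrix.conjTranspose_eq_transpose_of_trivial]
  have hnn : ∀ i j, 0 ≤ M i j := fun i j => (hentries i j).1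
  have hd0 : 0 ≤ d := le_trans (Finset.sum_nonneg fun j _ => hnn ⟨0, hn⟩ j) (hrow ⟨0, hn⟩)
  have step1 : ∑ c ∈ Finset.univ.filter (fun c : Fin (m+1) → Fin n => Function.Injective c),
        ∏ j : Fin (m+1), M (c j) (c (j + 1))
      ≤ ∑ c : Fin (m+1) → Fin n, ∏ j : Fin (m+1), M (c j) (c (j + 1)) :=
    Finset.sum_le_sum_of_subset_of_nonneg (Finset.filter_subset _ _)
      (fun c _ _ => Finset.prod_nonneg fun j _ => hnn _ _)
  refine le_trans step1 ?_
  rw [cyclic_sum, trace_pow_eq M hH]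
  have habs : ∀ i, |hH.eigenvalues i| ≤ d := eigenvalue_abs_le M hH hnn d hrow
  calc ∑ i, hH.eigenvalues i ^ (m+1)
      = ∑ i ∈ Finset.univ.filter (fun i => hH.eigenvalues i ≠ 0),
          hH.eigenvalues i ^ (m+1) := by
        rw [Finset.sum_filter_of_ne]
        intro i _ h
        intro h0
        exact h (by rw [h0, zero_pow (Nat.succ_ne_zero m)])
    _ ≤ ∑ i ∈ Finset.univ.filter (fun i => hH.eigenvalues i ≠ 0), d ^ (m+1) := by
        refine Finset.sum_le_sum fun i _ => ?_
        calc hH.eigenvalues i ^ (m+1) ≤ |hH.eigenvalues i ^ (m+1)| := le_abs_self _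
          _ = |hH.eigenvalues i| ^ (m+1) := abs_pow _ _
          _ ≤ d ^ (m+1) := pow_le_pow_left₀ (abs_nonneg _) (habs i) _
    _ = d ^ (m+1) * (M.rank : ℝ) := by
        rw [Finset.sum_const, nsmul_eq_mul, mul_comm]
        congr 2
        rw [hH.rank_eq_card_non_zero_eigs, Fintype.card_subtype]
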